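/- Let 0 < p < 1 be a constant and b = 1/p. There exists a constant α > 0 (depending on p) such that for all sufficiently large n the following holds: for every integer i with 1 ≤ i ≤ ⌈4·ln ln n⌉ and all integers s, j with 0 ≤ s < j ≤ (α·log_b n)/i, one has C(n−s, j−s)·(b·e^i)^{C(s,2)−C(j,2)} ≥ n^{7/8}. -/

import Mathlib

open Filter

theorem my_choose2 (s : ℕ) : ∀ j, s ≤ j → j.choose 2 ≤ s.choose 2 + (j - s) * j := by
  intro j
  induction j with
  | zero => intro h; interval_cases s; simp
  | succ m ih =>
      intro h
      rcases Nat.eq_or_lt_of_le h with h' | h'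
      · simp [h']
      · have hm : s ≤ m := by omega
        have := ih hm
        have hcs : (m+1).choose 2 = m.choose 1 + m.choose 2 := Nat.choose_succ_succ m 1
        rw [hcs]
        simp only [Nat.choose_one_right] at *
        have h1 : (m - s) * m + m ≤ (m + 1 - s) * (m + 1) := by
          have he : m - s + 1 = m + 1 - s := by omega
          calc (m - s) * m + m ≤ (m - s) * (m+1) + (m+1) := by nlinarith
            _ = (m - s + 1) * (m + 1) := by ring
            _ = (m + 1 - s) * (m+1) := by rw [he]
        omega

set_option maxHeartbeats 1000000 in
theorem c_sji_lower_bound (p : ℝ) (hp0 : 0 < p) (hp1 : p < 1) :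
    ∃ α : ℝ, 0 < α ∧ ∀ᶠ n : ℕ in atTop,
      ∀ i s j : ℕ, 1 ≤ i → i ≤ ⌈4 * Real.log (Real.log n)⌉₊ → s < j →
        (j : ℝ) ≤ α * (Real.log n / Real.log (1 / p)) / i →
        (n : ℝ) ^ ((7 : ℝ) / 8) ≤
          ((n - s).choose (j - s) : ℝ) *
            ((1 / p) * Real.exp i) ^ ((s.choose 2 : ℤ) - (j.choose 2 : ℤ)) := by
  have hb1 : 1 < 1 / p := by rw [lt_div_iff₀ hp0]; linarith
  set lb := Real.log (1 / p) with hlbdef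
  have hlb : 0 < lb := Real.log_pos hb1
  refine ⟨lb / (16 * (lb + 1)), by positivity, ?_⟩
  have hev1 : ∀ᶠ n : ℕ in atTop, (128 : ℝ) ≤ (n : ℝ) ^ ((1 : ℝ) / 32) := by
    have h := (tendsto_rpow_atTop (show (0:ℝ) < 1/32 by norm_num)).comp
      (tendsto_natCast_atTop_atTop (R := ℝ))
    exact h.eventually_ge_atTop 128
  filter_upwards [hev1, eventually_ge_atTop 3] with n hn128 hn3
  intro i s j hi1 _ hsj hjle
  have hn0 : (0 : ℝ) < n := by
    have : (3:ℝ) ≤ n := by exact_mod_cast hn3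
    linarith
  have hn1 : (1 : ℝ) ≤ n := by
    have : (3:ℝ) ≤ n := by exact_mod_cast hn3
    linarith
  set L := Real.log n with hLdef
  have hL1 : (1 : ℝ) ≤ L := by
    rw [hLdef, Real.le_log_iff_exp_le hn0]
    have h1 : Real.exp 1 < 2.7182818286 := Real.exp_one_lt_d9
    have h2 : (3:ℝ) ≤ n := by exact_mod_cast hn3
    linarith
  have hi1R : (1 : ℝ) ≤ (i : ℝ) := by exact_mod_cast hi1
  have hiR0 : (0 : ℝ) < (i : ℝ) := by linarith
  have hj0 : (0 : ℝ) ≤ (j : ℝ) := Nat.cast_nonneg j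
  -- j * i bound
  have hji : (j : ℝ) * i ≤ L / (16 * (lb + 1)) := by
    have h := (le_div_iff₀ hiR0).mp hjle
    have he : lb / (16 * (lb + 1)) * (L / lb) = L / (16 * (lb + 1)) := by
      field_simp
    linarith [he ▸ h]
  have hjb : (j : ℝ) ≤ L / (16 * (lb + 1)) := by nlinarith
  have hkey : (j : ℝ) * (lb + i) ≤ L / 16 := by
    have h1 : (j : ℝ) * lb ≤ L / (16 * (lb + 1)) * lb :=
      mul_le_mul_of_nonneg_right hjb hlb.le
    have h2 : L / (16 * (lb + 1)) * lb + L / (16 * (lb + 1)) = L / 16 := by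
      field_simp
    nlinarith
  have hjL : (j : ℝ) ≤ L / 16 := by
    refine hjb.trans ?_
    rw [div_le_div_iff₀ (by positivity) (by norm_num)]
    nlinarith
  -- rpow facts
  have hL32 : L ≤ 32 * (n : ℝ) ^ ((1 : ℝ) / 32) := by
    have h := Real.log_le_rpow_div (n.cast_nonneg) (show (0:ℝ) < 1/32 by norm_num)
    rw [div_div_eq_mul_div] at h
    linarith [h]
  have hjn : (j : ℝ) ≤ 2 * (n : ℝ) ^ ((1 : ℝ) / 32) := by linarith
  have hrpw0 : (0:ℝ) < (n : ℝ) ^ ((31 : ℝ) / 32) := Real.rpow_pos_of_pos hn0 _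
  have hmono : (n : ℝ) ^ ((1 : ℝ) / 32) ≤ (n : ℝ) ^ ((31 : ℝ) / 32) :=
    Real.rpow_le_rpow_of_exponent_le hn1 (by norm_num)
  have hsplit : (n : ℝ) ^ ((31 : ℝ) / 32) * (n : ℝ) ^ ((1 : ℝ) / 32) = n := by
    rw [← Real.rpow_add hn0]
    norm_num
  have hhalf : 2 * (n : ℝ) ^ ((1 : ℝ) / 32) ≤ (n : ℝ) / 2 := by
    nlinarith
  have hjn2 : (j : ℝ) ≤ (n : ℝ) / 2 := hjn.trans hhalf
  have hjltn : j < n := by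
    have : (j : ℝ) < n := by linarith
    exact_mod_cast this
  have hsn : s ≤ n := by omega
  -- E facts
  set E := 1 / p * Real.exp i with hEdef
  have hE1 : (1 : ℝ) ≤ E := by
    have h1 : (1:ℝ) ≤ Real.exp i := Real.one_le_exp (Nat.cast_nonneg i)
    have h2 : (1:ℝ) ≤ 1 / p := hb1.le
    calc (1:ℝ) = 1 * 1 := by ring
      _ ≤ 1 / p * Real.exp i := mul_le_mul h2 h1 one_pos.le (by positivity)
  have hE0 : (0 : ℝ) < E := lt_of_lt_of_le one_pos hE1
  set k := j - s with hkdef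
  have hk1 : 1 ≤ k := by omega
  -- step A
  have hcc : j.choose 2 ≤ s.choose 2 + k * j := my_choose2 s j hsj.le
  have hzez : -((k * j : ℕ) : ℤ) ≤ (s.choose 2 : ℤ) - (j.choose 2 : ℤ) := by
    have : (j.choose 2 : ℤ) ≤ (s.choose 2 : ℤ) + ((k * j : ℕ) : ℤ) := by exact_mod_cast hcc
    linarith
  have hstepA : (E ^ (k * j))⁻¹ ≤ E ^ ((s.choose 2 : ℤ) - (j.choose 2 : ℤ)) := by
    have h := zpow_le_zpow_right₀ hE1 hzez
    rwa [zpow_neg, zpow_natCast] at h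
  -- choose bound
  have hchoose : ((n - j + 1 : ℕ) : ℝ) ^ k / (k : ℝ) ^ k ≤ ((n - s).choose k : ℝ) := by
    have h1 := Nat.pow_le_choose (α := ℝ) k (n - s)
    have he : (n - s) + 1 - k = n - j + 1 := by omega
    rw [he] at h1
    refine le_trans (div_le_div_of_nonneg_left (by positivity)
      (by exact_mod_cast k.factorial_pos) ?_) h1
    exact_mod_cast Nat.factorial_le_pow k
  -- E^j bound
  have hEj : E ^ j ≤ (n : ℝ) ^ ((1 : ℝ) / 16) := by
    have hbexp : (1 / p : ℝ) = Real.exp lb := (Real.exp_log (by positivity)).symm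
    have h1 : E ^ j = Real.exp ((j : ℝ) * lb + (j : ℝ) * i) := by
      rw [hEdef, hbexp, mul_pow, ← Real.exp_nat_mul, ← Real.exp_nat_mul, ← Real.exp_add]
    have h2 : (n : ℝ) ^ ((1 : ℝ) / 16) = Real.exp (L * (1 / 16)) := by
      rw [hLdef, Real.rpow_def_of_pos hn0]
    rw [h1, h2]
    apply Real.exp_le_exp.mpr
    nlinarith [hkey]
  have hEj0 : (0:ℝ) < E ^ j := by positivity
  have hkj : (k : ℝ) ≤ (j : ℝ) := by exact_mod_cast Nat.sub_le j s
  have hk0R : (0:ℝ) < (k:ℝ) := by exact_mod_cast hk1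
  -- core inequality
  have hcast : ((n - j + 1 : ℕ) : ℝ) = (n : ℝ) - j + 1 := by
    push_cast [hjltn.le]
    ring
  have hcore : (n : ℝ) ^ ((7 : ℝ) / 8) * ((k : ℝ) * E ^ j) ≤ ((n - j + 1 : ℕ) : ℝ) := by
    rw [hcast]
    have h78 : (0:ℝ) < (n : ℝ) ^ ((7 : ℝ) / 8) := Real.rpow_pos_of_pos hn0 _
    have hmul : (n : ℝ) ^ ((7 : ℝ) / 8) * ((n : ℝ) ^ ((1 : ℝ) / 32) * (n : ℝ) ^ ((1 : ℝ) / 16))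
        = (n : ℝ) ^ ((31 : ℝ) / 32) := by
      rw [← Real.rpow_add hn0, ← Real.rpow_add hn0]
      norm_num
    have hb1' : (k : ℝ) * E ^ j ≤ 2 * (n : ℝ) ^ ((1 : ℝ) / 32) * (n : ℝ) ^ ((1 : ℝ) / 16) := by
      have := hjn
      have h16 : (0:ℝ) < (n : ℝ) ^ ((1 : ℝ) / 16) := Real.rpow_pos_of_pos hn0 _
      calc (k : ℝ) * E ^ j ≤ (2 * (n : ℝ) ^ ((1 : ℝ) / 32)) * (n : ℝ) ^ ((1 : ℝ) / 16) := by
            apply mul_le_mul (by linarith) hEj hEj0.le (by positivity)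
        _ = 2 * (n : ℝ) ^ ((1 : ℝ) / 32) * (n : ℝ) ^ ((1 : ℝ) / 16) := by ring
    have h2 : (n : ℝ) ^ ((7 : ℝ) / 8) * ((k : ℝ) * E ^ j)
        ≤ 2 * (n : ℝ) ^ ((31 : ℝ) / 32) := by
      calc (n : ℝ) ^ ((7 : ℝ) / 8) * ((k : ℝ) * E ^ j)
          ≤ (n : ℝ) ^ ((7 : ℝ) / 8) * (2 * (n : ℝ) ^ ((1 : ℝ) / 32) * (n : ℝ) ^ ((1 : ℝ) / 16)) :=
            mul_le_mul_of_nonneg_left hb1' h78.le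
        _ = 2 * ((n : ℝ) ^ ((7 : ℝ) / 8) * ((n : ℝ) ^ ((1 : ℝ) / 32) * (n : ℝ) ^ ((1 : ℝ) / 16))) := by ring
        _ = 2 * (n : ℝ) ^ ((31 : ℝ) / 32) := by rw [hmul]
    have h3 : 2 * (n : ℝ) ^ ((31 : ℝ) / 32) ≤ (n : ℝ) / 2 := by nlinarith
    linarith
  -- assemble
  have hden : (0:ℝ) < (k : ℝ) * E ^ j := by positivity
  set B := ((n - j + 1 : ℕ) : ℝ) / ((k : ℝ) * E ^ j) with hBdef
  have hB78 : (n : ℝ) ^ ((7 : ℝ) / 8) ≤ B := (le_div_iff₀ hden).mpr hcore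
  have hB1 : (1 : ℝ) ≤ B := le_trans (Real.one_le_rpow hn1 (by norm_num)) hB78
  have hchoose0 : (0:ℝ) ≤ ((n - s).choose k : ℝ) := Nat.cast_nonneg _
  calc (n : ℝ) ^ ((7 : ℝ) / 8) ≤ B := hB78
    _ ≤ B ^ k := le_self_pow₀ hB1 (by omega)
    _ = ((n - j + 1 : ℕ) : ℝ) ^ k / (k : ℝ) ^ k * (E ^ (k * j))⁻¹ := by
        rw [hBdef, div_pow, mul_pow, ← pow_mul, mul_comm j k]
        rw [div_mul_eq_div_div, div_eq_mul_inv]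
    _ ≤ ((n - s).choose k : ℝ) * (E ^ (k * j))⁻¹ :=
        mul_le_mul_of_nonneg_right hchoose (by positivity)
    _ ≤ ((n - s).choose k : ℝ) * E ^ ((s.choose 2 : ℤ) - (j.choose 2 : ℤ)) :=
        mul_le_mul_of_nonneg_left hstepA hchoose0
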